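/- If G is a complete bipartite graph K_{a,b} with a + b = n, then q(G) = n; conversely, among triangle-free graphs of order n, q(G) = n holds if and only if G is a complete bipartite graph (with both parts nonempty). -/

import Mathlib

open Matrix SimpleGraph Finset BigOperators

variable {V : Type*}

noncomputable def signlessLap (G : SimpleGraph V) [Fintype V] [DecidableEq V]
    [DecidableRel G.Adj] : Matrix V V ℝ :=
  Matrix.diagonal (fun v => (G.degree v : ℝ)) + G.adjMatrix ℝ

theorem signlessLap_isHermitian (G : SimpleGraph V) [Fintype V] [DecidableEq V]
    [DecidableRel G.Adj] : (signlessLap G).IsHermitian := by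
  unfold signlessLap
  apply Matrix.IsHermitian.add
  · exact Matrix.isHermitian_diagonal _
  · ext i j
    simp [Matrix.conjTranspose_apply, SimpleGraph.adjMatrix_apply, adj_comm]

noncomputable def qIndex (G : SimpleGraph V) [Fintype V] [DecidableEq V]
    [DecidableRel G.Adj] : ℝ :=
  ⨆ i, (signlessLap_isHermitian G).eigenvalues i

section Aux

variable (G : SimpleGraph V) [Fintype V] [DecidableEq V] [DecidableRel G.Adj]

private lemma sum_nbr_eq (F : V → V → ℝ) :
    ∑ u, ∑ v ∈ G.neighborFinset u, F u v = ∑ u, ∑ v, if G.Adj u v then F u v else 0 := by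
  refine Finset.sum_congr rfl fun u _ => ?_
  rw [SimpleGraph.neighborFinset_eq_filter, Finset.sum_filter]

private lemma swap_nbr (F : V → V → ℝ) :
    ∑ u, ∑ v ∈ G.neighborFinset u, F u v = ∑ u, ∑ v ∈ G.neighborFinset u, F v u := by
  rw [sum_nbr_eq, sum_nbr_eq, Finset.sum_comm]
  refine Finset.sum_congr rfl fun u _ => Finset.sum_congr rfl fun v _ => ?_
  exact if_congr (G.adj_comm _ _) rfl rfl

private lemma qf_eq (z : V → ℝ) :
    z ⬝ᵥ (signlessLap G *ᵥ z) = ∑ u, ∑ v ∈ G.neighborFinset u, ((z u + z v) ^ 2 / 2) := by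
  have h1 : z ⬝ᵥ (signlessLap G *ᵥ z)
      = ∑ u, ((G.degree u : ℝ) * z u ^ 2 + z u * ∑ v ∈ G.neighborFinset u, z v) := by
    unfold signlessLap
    rw [add_mulVec, dotProduct_add]
    simp only [dotProduct, mulVec_diagonal, adjMatrix_mulVec_apply]
    rw [← Finset.sum_add_distrib]
    refine Finset.sum_congr rfl fun u _ => ?_
    ring
  have h4 : ∀ u : V, ∑ v ∈ G.neighborFinset u, (z u ^ 2 / 2)
      = (G.degree u : ℝ) * (z u ^ 2 / 2) := by
    intro u
    rw [Finset.sum_const, ← SimpleGraph.card_neighborFinset_eq_degree, nsmul_eq_mul]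
  calc z ⬝ᵥ (signlessLap G *ᵥ z)
      = ∑ u, ((G.degree u : ℝ) * z u ^ 2 + z u * ∑ v ∈ G.neighborFinset u, z v) := h1
    _ = ∑ u, ((G.degree u : ℝ) * (z u ^ 2 / 2)
          + ((G.degree u : ℝ) * (z u ^ 2 / 2) + z u * ∑ v ∈ G.neighborFinset u, z v)) :=
        Finset.sum_congr rfl fun u _ => by ring
    _ = (∑ u, (G.degree u : ℝ) * (z u ^ 2 / 2))
          + ∑ u, ((G.degree u : ℝ) * (z u ^ 2 / 2) + z u * ∑ v ∈ G.neighborFinset u, z v) :=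
        Finset.sum_add_distrib
    _ = (∑ u, ∑ v ∈ G.neighborFinset u, (z v ^ 2 / 2))
          + ∑ u, (∑ v ∈ G.neighborFinset u, (z u ^ 2 / 2)
            + ∑ v ∈ G.neighborFinset u, (z u * z v)) := by
        congr 1
        · rw [swap_nbr G (fun u v => z v ^ 2 / 2)]
          exact (Finset.sum_congr rfl fun u _ => (h4 u)).symm
        · refine Finset.sum_congr rfl fun u _ => ?_
          rw [h4 u, Finset.mul_sum]
    _ = ∑ u, (∑ v ∈ G.neighborFinset u, (z v ^ 2 / 2)
          + (∑ v ∈ G.neighborFinset u, (z u ^ 2 / 2)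
            + ∑ v ∈ G.neighborFinset u, (z u * z v))) := Finset.sum_add_distrib.symm
    _ = ∑ u, ∑ v ∈ G.neighborFinset u, ((z u + z v) ^ 2 / 2) := by
        refine Finset.sum_congr rfl fun u _ => ?_
        rw [← Finset.sum_add_distrib, ← Finset.sum_add_distrib]
        refine Finset.sum_congr rfl fun v _ => by ring

private lemma deg_add (h3 : G.CliqueFree 3) {u v : V} (huv : G.Adj u v) :
    G.degree u + G.degree v ≤ Fintype.card V := by
  have hdisj : Disjoint (G.neighborFinset u) (G.neighborFinset v) := by
    rw [Finset.disjoint_left]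
    intro w hw hw'
    rw [SimpleGraph.mem_neighborFinset] at hw hw'
    exact h3 {u, v, w} (SimpleGraph.is3Clique_triple_iff.mpr ⟨huv, hw, hw'⟩)
  calc G.degree u + G.degree v
      = (G.neighborFinset u ∪ G.neighborFinset v).card := by
        rw [Finset.card_union_of_disjoint hdisj,
          SimpleGraph.card_neighborFinset_eq_degree,
          SimpleGraph.card_neighborFinset_eq_degree]
    _ ≤ Fintype.card V := Finset.card_le_univ _

private lemma cs_aux {a b s t : ℝ} (hs : 0 < s) (ht : 0 < t) :
    (a + b) ^ 2 ≤ (s + t) * (a ^ 2 / s + b ^ 2 / t) := by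
  have key : (s + t) * (a ^ 2 / s + b ^ 2 / t) - (a + b) ^ 2 = (t * a - s * b) ^ 2 / (s * t) := by
    field_simp
    ring
  nlinarith [div_nonneg (sq_nonneg (t * a - s * b)) (le_of_lt (mul_pos hs ht))]

private lemma deg_pos {u v : V} (huv : G.Adj u v) : (0 : ℝ) < (G.degree u : ℝ) := by
  have : 0 < G.degree u := G.degree_pos_iff_exists_adj u |>.mpr ⟨v, huv⟩
  exact_mod_cast this

private lemma term_le (h3 : G.CliqueFree 3) (z : V → ℝ) {u v : V} (huv : G.Adj u v) :
    (z u + z v) ^ 2 / 2 ≤ ((Fintype.card V : ℝ) / 2)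
      * (z u ^ 2 / (G.degree u : ℝ) + z v ^ 2 / (G.degree v : ℝ)) := by
  have hdu := deg_pos G huv
  have hdv := deg_pos G huv.symm
  have h1 : (z u + z v) ^ 2 ≤ ((G.degree u : ℝ) + (G.degree v : ℝ))
      * (z u ^ 2 / (G.degree u : ℝ) + z v ^ 2 / (G.degree v : ℝ)) := cs_aux hdu hdv
  have h2 : ((G.degree u : ℝ) + (G.degree v : ℝ)) ≤ (Fintype.card V : ℝ) := by
    exact_mod_cast deg_add G h3 huv
  have hP : 0 ≤ z u ^ 2 / (G.degree u : ℝ) + z v ^ 2 / (G.degree v : ℝ) :=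
    add_nonneg (div_nonneg (sq_nonneg _) hdu.le) (div_nonneg (sq_nonneg _) hdv.le)
  nlinarith [mul_le_mul_of_nonneg_right h2 hP]

private lemma S2_eq (z : V → ℝ) :
    ∑ u, ∑ v ∈ G.neighborFinset u, (((Fintype.card V : ℝ) / 2)
        * (z u ^ 2 / (G.degree u : ℝ) + z v ^ 2 / (G.degree v : ℝ)))
      = ∑ u, (Fintype.card V : ℝ) * ((G.degree u : ℝ) * (z u ^ 2 / (G.degree u : ℝ))) := by
  have h0 : ∀ u : V, ∀ v ∈ G.neighborFinset u,
      ((Fintype.card V : ℝ) / 2) * (z u ^ 2 / (G.degree u : ℝ) + z v ^ 2 / (G.degree v : ℝ))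
        = ((Fintype.card V : ℝ) / 2) * (z u ^ 2 / (G.degree u : ℝ))
          + ((Fintype.card V : ℝ) / 2) * (z v ^ 2 / (G.degree v : ℝ)) := by
    intro u v _; ring
  rw [Finset.sum_congr rfl fun u _ => Finset.sum_congr rfl (h0 u)]
  have hsplit : ∑ u, ∑ v ∈ G.neighborFinset u,
      (((Fintype.card V : ℝ) / 2) * (z u ^ 2 / (G.degree u : ℝ))
        + ((Fintype.card V : ℝ) / 2) * (z v ^ 2 / (G.degree v : ℝ)))
      = (∑ u, ∑ v ∈ G.neighborFinset u, ((Fintype.card V : ℝ) / 2) * (z u ^ 2 / (G.degree u : ℝ)))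
        + ∑ u, ∑ v ∈ G.neighborFinset u,
            ((Fintype.card V : ℝ) / 2) * (z v ^ 2 / (G.degree v : ℝ)) := by
    rw [← Finset.sum_add_distrib]
    refine Finset.sum_congr rfl fun u _ => Finset.sum_add_distrib
  rw [hsplit]
  have hswap : ∑ u, ∑ v ∈ G.neighborFinset u,
      ((Fintype.card V : ℝ) / 2) * (z v ^ 2 / (G.degree v : ℝ))
      = ∑ u, ∑ v ∈ G.neighborFinset u,
          ((Fintype.card V : ℝ) / 2) * (z u ^ 2 / (G.degree u : ℝ)) := (swap_nbr G _).symm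
  rw [hswap, ← Finset.sum_add_distrib]
  refine Finset.sum_congr rfl fun u _ => ?_
  rw [Finset.sum_const, ← SimpleGraph.card_neighborFinset_eq_degree, nsmul_eq_mul]
  ring

private lemma dav_le (z : V → ℝ) (u : V) :
    (G.degree u : ℝ) * (z u ^ 2 / (G.degree u : ℝ)) ≤ z u ^ 2 := by
  rcases eq_or_ne (G.degree u) 0 with h | h
  · rw [h]; simpa using sq_nonneg (z u)
  · have : (G.degree u : ℝ) ≠ 0 := Nat.cast_ne_zero.mpr h
    rw [mul_comm, div_mul_cancel₀ _ this]

private lemma dot_self_eq (z : V → ℝ) : z ⬝ᵥ z = ∑ u, z u ^ 2 := by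
  simp [dotProduct, sq]

private lemma qf_le (h3 : G.CliqueFree 3) (z : V → ℝ) :
    z ⬝ᵥ (signlessLap G *ᵥ z) ≤ (Fintype.card V : ℝ) * (z ⬝ᵥ z) := by
  rw [qf_eq, dot_self_eq]
  calc ∑ u, ∑ v ∈ G.neighborFinset u, ((z u + z v) ^ 2 / 2)
      ≤ ∑ u, ∑ v ∈ G.neighborFinset u, (((Fintype.card V : ℝ) / 2)
          * (z u ^ 2 / (G.degree u : ℝ) + z v ^ 2 / (G.degree v : ℝ))) := by
        refine Finset.sum_le_sum fun u _ => Finset.sum_le_sum fun v hv => ?_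
        exact term_le G h3 z ((SimpleGraph.mem_neighborFinset _ _ _).mp hv)
    _ = ∑ u, (Fintype.card V : ℝ) * ((G.degree u : ℝ) * (z u ^ 2 / (G.degree u : ℝ))) := S2_eq G z
    _ ≤ ∑ u, (Fintype.card V : ℝ) * z u ^ 2 := by
        refine Finset.sum_le_sum fun u _ => ?_
        exact mul_le_mul_of_nonneg_left (dav_le G z u) (Nat.cast_nonneg _)
    _ = (Fintype.card V : ℝ) * ∑ u, z u ^ 2 := by rw [Finset.mul_sum]

private lemma qf_tight (h3 : G.CliqueFree 3) (z : V → ℝ)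
    (hz : z ⬝ᵥ (signlessLap G *ᵥ z) = (Fintype.card V : ℝ) * (z ⬝ᵥ z)) :
    ∀ u v : V, G.Adj u v → (z u + z v) ^ 2
      = (Fintype.card V : ℝ) * (z u ^ 2 / (G.degree u : ℝ) + z v ^ 2 / (G.degree v : ℝ)) := by
  have hle : ∀ u ∈ (univ : Finset V), ∑ v ∈ G.neighborFinset u, ((z u + z v) ^ 2 / 2)
      ≤ ∑ v ∈ G.neighborFinset u, (((Fintype.card V : ℝ) / 2)
          * (z u ^ 2 / (G.degree u : ℝ) + z v ^ 2 / (G.degree v : ℝ))) := by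
    intro u _
    refine Finset.sum_le_sum fun v hv => term_le G h3 z ((SimpleGraph.mem_neighborFinset _ _ _).mp hv)
  have hS2le : ∑ u, ∑ v ∈ G.neighborFinset u, (((Fintype.card V : ℝ) / 2)
      * (z u ^ 2 / (G.degree u : ℝ) + z v ^ 2 / (G.degree v : ℝ)))
      ≤ (Fintype.card V : ℝ) * (z ⬝ᵥ z) := by
    rw [S2_eq, dot_self_eq, Finset.mul_sum]
    exact Finset.sum_le_sum fun u _ =>
      mul_le_mul_of_nonneg_left (dav_le G z u) (Nat.cast_nonneg _)
  have hS1 : z ⬝ᵥ (signlessLap G *ᵥ z)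
      = ∑ u, ∑ v ∈ G.neighborFinset u, ((z u + z v) ^ 2 / 2) := qf_eq G z
  have heq : ∑ u, ∑ v ∈ G.neighborFinset u, ((z u + z v) ^ 2 / 2)
      = ∑ u, ∑ v ∈ G.neighborFinset u, (((Fintype.card V : ℝ) / 2)
          * (z u ^ 2 / (G.degree u : ℝ) + z v ^ 2 / (G.degree v : ℝ))) := by
    refine le_antisymm (Finset.sum_le_sum hle) ?_
    rw [← hS1]
    rw [hz] at hS1 ⊢
    linarith [hS2le, hS1]
  have hterm := (Finset.sum_eq_sum_iff_of_le hle).mp heq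
  intro u v huv
  have hv : v ∈ G.neighborFinset u := (SimpleGraph.mem_neighborFinset _ _ _).mpr huv
  have hinner := (Finset.sum_eq_sum_iff_of_le
    (fun v hv => term_le G h3 z ((SimpleGraph.mem_neighborFinset _ _ _).mp hv))).mp
      (hterm u (Finset.mem_univ u)) v hv
  linarith [hinner]

private lemma qf_le_qIndex [Nonempty V] (z : V → ℝ) :
    z ⬝ᵥ (signlessLap G *ᵥ z) ≤ qIndex G * (z ⬝ᵥ z) := by
  have hA := signlessLap_isHermitian G
  set A := signlessLap G with hAdef
  set U : Matrix V V ℝ := (hA.eigenvectorUnitary : Matrix V V ℝ) with hUdef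
  have hsU : star U = Uᵀ := by
    rw [Matrix.star_eq_conjTranspose, Matrix.conjTranspose_eq_transpose_of_trivial]
  set w : V → ℝ := Uᵀ *ᵥ z with hwdef
  have hU1 : U * Uᵀ = 1 := by
    rw [← hsU]; exact mem_unitaryGroup_iff.mp hA.eigenvectorUnitary.2
  have hzw : z ⬝ᵥ z = w ⬝ᵥ w := by
    rw [hwdef, dotProduct_mulVec, Matrix.vecMul_transpose, Matrix.mulVec_mulVec, hU1,
      Matrix.one_mulVec]
  have hAz : z ⬝ᵥ (A *ᵥ z) = ∑ i, hA.eigenvalues i * w i ^ 2 := by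
    conv_lhs => rw [hA.spectral_theorem, Unitary.conjStarAlgAut_apply]
    rw [← Matrix.mulVec_mulVec, ← Matrix.mulVec_mulVec, dotProduct_mulVec,
      ← Matrix.mulVec_transpose, hsU]
    simp only [dotProduct, Matrix.mulVec_diagonal, Function.comp_apply, RCLike.ofReal_real_eq_id,
      id_eq]
    exact Finset.sum_congr rfl fun i _ => by ring
  have hbdd : BddAbove (Set.range hA.eigenvalues) := Set.Finite.bddAbove (Set.finite_range _)
  have hle : ∀ i, hA.eigenvalues i ≤ qIndex G := fun i => le_ciSup hbdd i
  calc z ⬝ᵥ (A *ᵥ z) = ∑ i, hA.eigenvalues i * w i ^ 2 := hAz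
    _ ≤ ∑ i, qIndex G * w i ^ 2 := Finset.sum_le_sum fun i _ =>
        mul_le_mul_of_nonneg_right (hle i) (sq_nonneg _)
    _ = qIndex G * (w ⬝ᵥ w) := by rw [dot_self_eq, Finset.mul_sum]
    _ = qIndex G * (z ⬝ᵥ z) := by rw [hzw]

private lemma exists_eigvec [Nonempty V] :
    ∃ x : V → ℝ, x ≠ 0 ∧ signlessLap G *ᵥ x = qIndex G • x := by
  have hA := signlessLap_isHermitian G
  obtain ⟨i, hi⟩ := Finite.exists_max hA.eigenvalues
  have hq : qIndex G = hA.eigenvalues i :=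
    le_antisymm (ciSup_le hi) (le_ciSup (Set.Finite.bddAbove (Set.finite_range _)) i)
  refine ⟨⇑(hA.eigenvectorBasis i), ?_, by rw [hq]; exact hA.mulVec_eigenvectorBasis i⟩
  have hne := hA.eigenvectorBasis.toBasis.ne_zero i
  rw [OrthonormalBasis.coe_toBasis] at hne
  intro h
  exact hne (by ext j; exact congrFun h j)

private lemma dot_pos {z : V → ℝ} (hz : z ≠ 0) : 0 < z ⬝ᵥ z := by
  have h0 : 0 ≤ z ⬝ᵥ z := by rw [dot_self_eq]; positivity
  rcases h0.lt_or_eq with h | h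
  · exact h
  · exact absurd (dotProduct_self_eq_zero.mp h.symm) hz

private lemma mulVec_apply_eq (z : V → ℝ) (v : V) :
    (signlessLap G *ᵥ z) v = (G.degree v : ℝ) * z v + ∑ u ∈ G.neighborFinset v, z u := by
  rw [signlessLap, Matrix.add_mulVec]
  simp [Matrix.mulVec_diagonal, adjMatrix_mulVec_apply]

end Aux

theorem stmt19 (G : SimpleGraph V) [Fintype V] [DecidableEq V] [DecidableRel G.Adj]
    (hn : 2 ≤ Fintype.card V) (h3 : G.CliqueFree 3) :
    qIndex G = (Fintype.card V : ℝ) ↔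
      ∃ s : Finset V, s.Nonempty ∧ sᶜ.Nonempty ∧
        ∀ u v : V, G.Adj u v ↔ ((u ∈ s ∧ v ∉ s) ∨ (u ∉ s ∧ v ∈ s)) := by
  have hnontriv : Nonempty V := Fintype.card_pos_iff.mp (by omega)
  have hqn : qIndex G ≤ (Fintype.card V : ℝ) := by
    obtain ⟨x, hx0, hx⟩ := exists_eigvec G
    have h1 : x ⬝ᵥ (signlessLap G *ᵥ x) = qIndex G * (x ⬝ᵥ x) := by
      rw [hx, dotProduct_smul, smul_eq_mul]
    have h2 := qf_le G h3 x
    exact le_of_mul_le_mul_right (by linarith) (dot_pos hx0)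
  constructor
  · -- converse direction : q = n implies complete bipartite
    intro hq
    obtain ⟨x, hx0, hx⟩ := exists_eigvec G
    rw [hq] at hx
    set y : V → ℝ := fun v => |x v| with hy
    have hyy : y ⬝ᵥ y = x ⬝ᵥ x := by
      rw [dot_self_eq, dot_self_eq]
      exact Finset.sum_congr rfl fun v _ => sq_abs _
    have hqfx : x ⬝ᵥ (signlessLap G *ᵥ x) = (Fintype.card V : ℝ) * (x ⬝ᵥ x) := by
      rw [hx, dotProduct_smul, smul_eq_mul]
    have hqfy_ge : x ⬝ᵥ (signlessLap G *ᵥ x) ≤ y ⬝ᵥ (signlessLap G *ᵥ y) := by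
      rw [qf_eq, qf_eq]
      refine Finset.sum_le_sum fun u _ => Finset.sum_le_sum fun v _ => ?_
      have h1 := abs_add_le (x u) (x v)
      have h2 : |x u + x v| ^ 2 = (x u + x v) ^ 2 := sq_abs _
      have h3' : (x u + x v) ^ 2 ≤ (|x u| + |x v|) ^ 2 := by
        nlinarith [abs_nonneg (x u + x v), abs_nonneg (x u), abs_nonneg (x v)]
      simp only [hy]
      linarith
    have hqfy_le := qf_le G h3 y
    have hqfy : y ⬝ᵥ (signlessLap G *ᵥ y) = (Fintype.card V : ℝ) * (y ⬝ᵥ y) := by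
      refine le_antisymm hqfy_le ?_
      rw [hyy]
      linarith
    have hM : (((Fintype.card V : ℝ) • (1 : Matrix V V ℝ)) - signlessLap G).PosSemidef := by
      rw [Matrix.posSemidef_iff_dotProduct_mulVec]
      constructor
      · have h1 : ((Fintype.card V : ℝ) • (1 : Matrix V V ℝ)).IsHermitian := by
          unfold Matrix.IsHermitian
          rw [Matrix.conjTranspose_smul, Matrix.conjTranspose_one, star_trivial]
        exact h1.sub (signlessLap_isHermitian G)
      · intro z
        have hsz : star z = z := star_trivial z
        have hmv : (((Fintype.card V : ℝ) • (1 : Matrix V V ℝ)) - signlessLap G) *ᵥ z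
            = (Fintype.card V : ℝ) • z - signlessLap G *ᵥ z := by
          rw [Matrix.sub_mulVec, Matrix.smul_mulVec, Matrix.one_mulVec]
        rw [hsz, hmv, dotProduct_sub, dotProduct_smul, smul_eq_mul]
        have := qf_le G h3 z
        linarith
    have hMy : (((Fintype.card V : ℝ) • (1 : Matrix V V ℝ)) - signlessLap G) *ᵥ y = 0 := by
      apply (hM.dotProduct_mulVec_zero_iff y).mp
      have hsy : star y = y := star_trivial y
      have hmv : (((Fintype.card V : ℝ) • (1 : Matrix V V ℝ)) - signlessLap G) *ᵥ y
          = (Fintype.card V : ℝ) • y - signlessLap G *ᵥ y := by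
        rw [Matrix.sub_mulVec, Matrix.smul_mulVec, Matrix.one_mulVec]
      rw [hsy, hmv, dotProduct_sub, dotProduct_smul, smul_eq_mul, hqfy, sub_self]
    have hQy : signlessLap G *ᵥ y = (Fintype.card V : ℝ) • y := by
      have h := hMy
      rw [Matrix.sub_mulVec, Matrix.smul_mulVec, Matrix.one_mulVec, sub_eq_zero] at h
      exact h.symm
    have happ : ∀ v, ∑ u ∈ G.neighborFinset v, y u
        = ((Fintype.card V : ℝ) - (G.degree v : ℝ)) * y v := by
      intro v
      have h1 := congrFun hQy v
      rw [mulVec_apply_eq] at h1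
      have h2 : ((Fintype.card V : ℝ) • y) v = (Fintype.card V : ℝ) * y v := rfl
      rw [h2] at h1
      linarith
    have hy0 : ∀ v, 0 ≤ y v := fun v => abs_nonneg _
    obtain ⟨v0, hv0⟩ : ∃ v, 0 < y v := by
      by_contra hcon
      push_neg at hcon
      apply hx0
      funext v
      have : y v = 0 := le_antisymm (hcon v) (hy0 v)
      simpa [hy, abs_eq_zero] using this
    have tight := qf_tight G h3 y hqfy
    have deg_eq : ∀ u v, G.Adj u v → 0 < y u →
        G.degree u + G.degree v = Fintype.card V := by
      intro u v huv hyu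
      have hdu := deg_pos G huv
      have hdv := deg_pos G huv.symm
      have hP : 0 < y u ^ 2 / (G.degree u : ℝ) + y v ^ 2 / (G.degree v : ℝ) :=
        add_pos_of_pos_of_nonneg (div_pos (pow_pos hyu 2) hdu)
          (div_nonneg (sq_nonneg _) hdv.le)
      have hcs := cs_aux (a := y u) (b := y v) hdu hdv
      have ht := tight u v huv
      have hge : (Fintype.card V : ℝ) ≤ (G.degree u : ℝ) + (G.degree v : ℝ) :=
        le_of_mul_le_mul_right (by linarith) hP
      have hge' : Fintype.card V ≤ G.degree u + G.degree v := by exact_mod_cast hge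
      have hle' := deg_add G h3 huv
      omega
    have hdlt : G.degree v0 < Fintype.card V := G.degree_lt_card_verts v0
    have hsum : 0 < ∑ u ∈ G.neighborFinset v0, y u := by
      rw [happ v0]
      have : (0 : ℝ) < (Fintype.card V : ℝ) - (G.degree v0 : ℝ) := by
        have : (G.degree v0 : ℝ) < (Fintype.card V : ℝ) := by exact_mod_cast hdlt
        linarith
      exact mul_pos this hv0
    obtain ⟨u0, hu0mem, hu0pos⟩ : ∃ u ∈ G.neighborFinset v0, 0 < y u := by
      by_contra hcon
      push_neg at hcon
      have : ∑ u ∈ G.neighborFinset v0, y u ≤ 0 :=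
        Finset.sum_nonpos fun u hu => hcon u hu
      linarith
    have hadj0 : G.Adj v0 u0 := (SimpleGraph.mem_neighborFinset _ _ _).mp hu0mem
    set s := G.neighborFinset u0 with hsdef
    have claim1 : ∀ w, G.Adj w u0 → G.neighborFinset w = sᶜ := by
      intro w hw
      have hdw : G.degree u0 + G.degree w = Fintype.card V := deg_eq u0 w hw.symm hu0pos
      have hsub : G.neighborFinset w ⊆ sᶜ := by
        intro t ht
        rw [Finset.mem_compl]
        intro hts
        rw [hsdef, SimpleGraph.mem_neighborFinset] at hts
        rw [SimpleGraph.mem_neighborFinset] at ht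
        exact h3 {w, u0, t} (SimpleGraph.is3Clique_triple_iff.mpr ⟨hw, ht, hts⟩)
      refine Finset.eq_of_subset_of_card_le hsub ?_
      rw [Finset.card_compl]
      rw [hsdef]
      rw [SimpleGraph.card_neighborFinset_eq_degree, SimpleGraph.card_neighborFinset_eq_degree]
      omega
    have hNv0 : G.neighborFinset v0 = sᶜ := claim1 v0 hadj0
    have claim2 : ∀ w, G.Adj w v0 → G.neighborFinset w = s := by
      intro w hw
      have hdw : G.degree v0 + G.degree w = Fintype.card V := deg_eq v0 w hw.symm hv0
      have hdv0u0 : G.degree v0 + G.degree u0 = Fintype.card V := deg_eq v0 u0 hadj0 hv0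
      have hsub : G.neighborFinset w ⊆ s := by
        intro t ht
        by_contra hts
        have htc : t ∈ sᶜ := Finset.mem_compl.mpr hts
        rw [← hNv0, SimpleGraph.mem_neighborFinset] at htc
        rw [SimpleGraph.mem_neighborFinset] at ht
        exact h3 {w, v0, t} (SimpleGraph.is3Clique_triple_iff.mpr ⟨hw, ht, htc⟩)
      refine Finset.eq_of_subset_of_card_le hsub ?_
      rw [hsdef]
      rw [SimpleGraph.card_neighborFinset_eq_degree, SimpleGraph.card_neighborFinset_eq_degree]
      omega
    have hadjs : ∀ u, u ∈ s → G.Adj u u0 := by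
      intro u hu
      rw [hsdef, SimpleGraph.mem_neighborFinset] at hu
      exact hu.symm
    have hadjsc : ∀ u, u ∈ sᶜ → G.Adj u v0 := by
      intro u hu
      rw [← hNv0, SimpleGraph.mem_neighborFinset] at hu
      exact hu.symm
    refine ⟨s, ⟨v0, ?_⟩, ⟨u0, ?_⟩, ?_⟩
    · rw [hsdef, SimpleGraph.mem_neighborFinset]; exact hadj0.symm
    · rw [Finset.mem_compl, hsdef]; exact G.notMem_neighborFinset_self u0
    intro u v
    constructor
    · intro huv
      by_cases hu : u ∈ s
      · left
        refine ⟨hu, ?_⟩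
        have hNu : G.neighborFinset u = sᶜ := claim1 u (hadjs u hu)
        have hvmem : v ∈ sᶜ := hNu ▸ (SimpleGraph.mem_neighborFinset _ _ _).mpr huv
        exact Finset.mem_compl.mp hvmem
      · right
        have huc : u ∈ sᶜ := Finset.mem_compl.mpr hu
        have hNu : G.neighborFinset u = s := claim2 u (hadjsc u huc)
        exact ⟨hu, hNu ▸ (SimpleGraph.mem_neighborFinset _ _ _).mpr huv⟩
    · rintro (⟨hu, hv⟩ | ⟨hu, hv⟩)
      · have hNu : G.neighborFinset u = sᶜ := claim1 u (hadjs u hu)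
        have : v ∈ G.neighborFinset u := hNu ▸ Finset.mem_compl.mpr hv
        exact (SimpleGraph.mem_neighborFinset _ _ _).mp this
      · have huc : u ∈ sᶜ := Finset.mem_compl.mpr hu
        have hNu : G.neighborFinset u = s := claim2 u (hadjsc u huc)
        have : v ∈ G.neighborFinset u := hNu ▸ hv
        exact (SimpleGraph.mem_neighborFinset _ _ _).mp this
  · -- forward direction : complete bipartite implies q = n
    rintro ⟨s, hs, hsc, hadj⟩
    have hN : ∀ v, G.neighborFinset v = if v ∈ s then sᶜ else s := by
      intro v
      ext u
      rw [SimpleGraph.mem_neighborFinset, hadj]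
      by_cases hv : v ∈ s <;> simp [hv, Finset.mem_compl]
    have hd : ∀ v, G.degree v = if v ∈ s then sᶜ.card else s.card := by
      intro v
      rw [← SimpleGraph.card_neighborFinset_eq_degree, hN v]
      split <;> rfl
    have hab : s.card + sᶜ.card = Fintype.card V := s.card_add_card_compl
    have ha1 : 0 < s.card := Finset.card_pos.mpr hs
    have hb1 : 0 < sᶜ.card := Finset.card_pos.mpr hsc
    set y : V → ℝ := fun v => if v ∈ s then (sᶜ.card : ℝ) else (s.card : ℝ) with hy
    have hy0 : y ≠ 0 := by
      obtain ⟨v, hv⟩ := hs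
      intro h
      have h1 := congrFun h v
      simp only [hy, hv, if_true, Pi.zero_apply] at h1
      have : sᶜ.card = 0 := by exact_mod_cast h1
      omega
    have hsum1 : ∑ u ∈ sᶜ, y u = (sᶜ.card : ℝ) * (s.card : ℝ) := by
      rw [Finset.sum_congr rfl (fun u hu => ?_), Finset.sum_const, nsmul_eq_mul]
      simp only [hy, Finset.mem_compl.mp hu, if_false]
    have hsum2 : ∑ u ∈ s, y u = (s.card : ℝ) * (sᶜ.card : ℝ) := by
      rw [Finset.sum_congr rfl (fun u hu => ?_), Finset.sum_const, nsmul_eq_mul]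
      simp only [hy, hu, if_true]
    have hQy : signlessLap G *ᵥ y = (Fintype.card V : ℝ) • y := by
      funext v
      rw [mulVec_apply_eq, hN v, hd v]
      have h2 : ((Fintype.card V : ℝ) • y) v = (Fintype.card V : ℝ) * y v := rfl
      rw [h2]
      by_cases hv : v ∈ s
      · simp only [hv, if_true]
        rw [hsum1]
        have hyv : y v = (sᶜ.card : ℝ) := by simp only [hy, hv, if_true]
        rw [hyv, ← hab]
        push_cast
        ring
      · simp only [hv, if_false]
        rw [hsum2]
        have hyv : y v = (s.card : ℝ) := by simp only [hy, hv, if_false]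
        rw [hyv, ← hab]
        push_cast
        ring
    have h1 : y ⬝ᵥ (signlessLap G *ᵥ y) = (Fintype.card V : ℝ) * (y ⬝ᵥ y) := by
      rw [hQy, dotProduct_smul, smul_eq_mul]
    have h2 := qf_le_qIndex G y
    have h4 : (Fintype.card V : ℝ) ≤ qIndex G :=
      le_of_mul_le_mul_right (by linarith) (dot_pos hy0)
    linarith
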